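/- arXiv:1708.09078 — 7 statements merged into one kernel-verified Lean document; each statement's English description precedes it below -/
import Mathlib

section
/- Let V be a complex inner product space and let e, f, h : V → V be complex-linear maps such that ⟨e u, w⟩ = ⟨u, f w⟩ for all u, w ∈ V, h = e ∘ f − f ∘ e, and h ∘ f − f ∘ h = −2 f. If v ∈ V is a unit vector with e v = 0 and h v = a • v for some real number a, then ‖f (f v)‖² = 2a(a−1); in particular ‖f (f v)‖² ≤ 2 ‖f v‖⁴, i.e. ‖f(f v)‖ ≤ √2 · ‖f v‖². -/
open scoped InnerProductSpace

/-- The case `α = β` of Lemma 2.3: an sl₂-type computation. If `f` is the adjoint of `e`,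
`h = e∘f - f∘e`, `h∘f - f∘h = -2f`, and `v` is a unit vector with `e v = 0` and
`h v = a • v`, then `‖f (f v)‖² = 2a(a-1)`; in particular `‖f (f v)‖ ≤ √2 ‖f v‖²`. -/
theorem stmt1 {V : Type*} [NormedAddCommGroup V] [InnerProductSpace ℂ V]
    (e f h : V →ₗ[ℂ] V)
    (hadj : ∀ u w : V, ⟪e u, w⟫_ℂ = ⟪u, f w⟫_ℂ)
    (hh : h = e ∘ₗ f - f ∘ₗ e)
    (hhf : h ∘ₗ f - f ∘ₗ h = (-2 : ℂ) • f)
    (v : V) (hv : ‖v‖ = 1) (hev : e v = 0)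
    (a : ℝ) (hav : h v = (a : ℂ) • v) :
    ‖f (f v)‖ ^ 2 = 2 * a * (a - 1) ∧ ‖f (f v)‖ ≤ Real.sqrt 2 * ‖f v‖ ^ 2 := by
  have hef : e (f v) = (a : ℂ) • v := by
    have h1 : e (f v) - f (e v) = h v := by rw [hh]; simp
    rw [hev, map_zero, sub_zero, hav] at h1
    exact h1
  have hhfv : h (f v) = ((a : ℂ) - 2) • f v := by
    have h1 : h (f v) - f (h v) = (-2 : ℂ) • f v := by
      have := congrArg (fun g : V →ₗ[ℂ] V => g v) hhf
      simpa using this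
    rw [hav, map_smul] at h1
    have : h (f v) = (a : ℂ) • f v + (-2 : ℂ) • f v := by
      linear_combination (norm := module) h1
    rw [this]; module
  have heffv : e (f (f v)) = (((2 * a - 2 : ℝ)) : ℂ) • f v := by
    have h1 : e (f (f v)) - f (e (f v)) = h (f v) := by rw [hh]; simp
    rw [hef, map_smul, hhfv] at h1
    have : e (f (f v)) = (a : ℂ) • f v + ((a : ℂ) - 2) • f v := by
      linear_combination (norm := module) h1
    rw [this]; push_cast; module
  have hfva : ‖f v‖ ^ 2 = a := by
    have h1 := hadj (f v) v
    rw [hef, inner_smul_left, Complex.conj_ofReal, inner_self_eq_norm_sq_to_K,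
      inner_self_eq_norm_sq_to_K] at h1
    simp only [Complex.coe_algebraMap] at h1
    have h2 : a * ‖v‖ ^ 2 = ‖f v‖ ^ 2 := by exact_mod_cast h1
    rw [hv] at h2; linarith
  have ha0 : 0 ≤ a := hfva ▸ sq_nonneg _
  have hffv2 : ‖f (f v)‖ ^ 2 = 2 * a * (a - 1) := by
    have h1 := hadj (f (f v)) (f v)
    rw [heffv, inner_smul_left, Complex.conj_ofReal, inner_self_eq_norm_sq_to_K,
      inner_self_eq_norm_sq_to_K] at h1
    simp only [Complex.coe_algebraMap] at h1
    have h2 : (2 * a - 2) * ‖f v‖ ^ 2 = ‖f (f v)‖ ^ 2 := by exact_mod_cast h1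
    rw [hfva] at h2
    rw [← h2]; ring
  refine ⟨hffv2, ?_⟩
  have h1 : ‖f (f v)‖ = Real.sqrt (2 * a * (a - 1)) := by
    rw [← hffv2, Real.sqrt_sq (norm_nonneg _)]
  rw [h1, hfva]
  calc Real.sqrt (2 * a * (a - 1)) ≤ Real.sqrt (2 * (a ^ 2)) := by
        apply Real.sqrt_le_sqrt; nlinarith
    _ = Real.sqrt 2 * a := by
        rw [Real.sqrt_mul (by norm_num), Real.sqrt_sq ha0]
end

section
/- Let V be a complex inner product space and let e, f, h, g : V → V be complex-linear maps such that ⟨e u, w⟩ = ⟨u, f w⟩ for all u, w ∈ V and h = e ∘ f − f ∘ e. Suppose v ∈ V is a unit vector with e v = 0, h v = a • v for a real number a, h (g v) = b • (g v) for a real number b, and (e ∘ g − g ∘ e) v = 0. Then ‖f (g v)‖² = b · ‖g v‖². Consequently, if b ≤ 2a then ‖f (g v)‖ ≤ √2 · ‖f v‖ · ‖g v‖, and if b ≤ a then ‖f (g v)‖ ≤ ‖f v‖ · ‖g v‖. -/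
open scoped InnerProductSpace

/-- Abstract core of Lemma 2.3 (Lemma mab). -/
theorem stmt2 {V : Type*} [NormedAddCommGroup V] [InnerProductSpace ℂ V]
    (e f h g : V →ₗ[ℂ] V)
    (hadj : ∀ u w : V, ⟪e u, w⟫_ℂ = ⟪u, f w⟫_ℂ)
    (hh : h = e ∘ₗ f - f ∘ₗ e)
    (v : V) (hv : ‖v‖ = 1) (hev : e v = 0)
    (a b : ℝ) (hav : h v = (a : ℂ) • v) (hbv : h (g v) = (b : ℂ) • (g v))
    (heg : (e ∘ₗ g - g ∘ₗ e) v = 0) :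
    ‖f (g v)‖ ^ 2 = b * ‖g v‖ ^ 2 ∧
    (b ≤ 2 * a → ‖f (g v)‖ ≤ Real.sqrt 2 * ‖f v‖ * ‖g v‖) ∧
    (b ≤ a → ‖f (g v)‖ ≤ ‖f v‖ * ‖g v‖) := by
  -- e (g v) = 0
  have hegv : e (g v) = 0 := by
    have : e (g v) - g (e v) = 0 := by simpa using heg
    simpa [hev] using this
  -- e (f (g v)) = b • g v
  have h1 : e (f (g v)) = (b : ℂ) • (g v) := by
    have : e (f (g v)) - f (e (g v)) = (b : ℂ) • (g v) := by
      have := hbv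
      rw [hh] at this
      simpa using this
    simpa [hegv] using this
  -- e (f v) = a • v
  have h2 : e (f v) = (a : ℂ) • v := by
    have : e (f v) - f (e v) = (a : ℂ) • v := by
      have := hav
      rw [hh] at this
      simpa using this
    simpa [hev] using this
  -- key norm identity
  have key : ‖f (g v)‖ ^ 2 = b * ‖g v‖ ^ 2 := by
    have h3 : ⟪f (g v), f (g v)⟫_ℂ = (b : ℂ) * (‖g v‖ : ℂ) ^ 2 := by
      rw [← hadj (f (g v)) (g v), h1, inner_smul_left, inner_self_eq_norm_sq_to_K]
      simp
    have h5 : ‖f (g v)‖ ^ 2 = RCLike.re ((b : ℂ) * (‖g v‖ : ℂ) ^ 2) := by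
      rw [← inner_self_eq_norm_sq (𝕜 := ℂ), h3]
    simpa [← Complex.ofReal_pow] using h5
  have keyv : ‖f v‖ ^ 2 = a := by
    have h3 : ⟪f v, f v⟫_ℂ = (a : ℂ) * (‖v‖ : ℂ) ^ 2 := by
      rw [← hadj (f v) v, h2, inner_smul_left, inner_self_eq_norm_sq_to_K]
      simp
    have h5 : ‖f v‖ ^ 2 = RCLike.re ((a : ℂ) * (‖v‖ : ℂ) ^ 2) := by
      rw [← inner_self_eq_norm_sq (𝕜 := ℂ), h3]
    simpa [hv] using h5
  refine ⟨key, ?_, ?_⟩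
  · intro hba
    have hsq : ‖f (g v)‖ ^ 2 ≤ (Real.sqrt 2 * ‖f v‖ * ‖g v‖) ^ 2 := by
      have h2' : (Real.sqrt 2) ^ 2 = 2 := Real.sq_sqrt (by norm_num)
      have : ‖f (g v)‖ ^ 2 ≤ 2 * a * ‖g v‖ ^ 2 := by
        rw [key]
        have := sq_nonneg ‖g v‖
        nlinarith
      calc ‖f (g v)‖ ^ 2 ≤ 2 * a * ‖g v‖ ^ 2 := this
        _ = (Real.sqrt 2 * ‖f v‖ * ‖g v‖) ^ 2 := by rw [mul_pow, mul_pow, h2', keyv]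
    have hrhs : 0 ≤ Real.sqrt 2 * ‖f v‖ * ‖g v‖ := by positivity
    nlinarith [norm_nonneg (f (g v))]
  · intro hba
    have hsq : ‖f (g v)‖ ^ 2 ≤ (‖f v‖ * ‖g v‖) ^ 2 := by
      rw [key, mul_pow, keyv]
      nlinarith [sq_nonneg ‖g v‖]
    have hrhs : 0 ≤ ‖f v‖ * ‖g v‖ := by positivity
    nlinarith [norm_nonneg (f (g v))]
end

section
/- Let E be a real inner product space, Δ⁺ a finite set of vectors in E, and r : Δ⁺ → ℝ with r(α) ≥ 0 for all α. For α, β ∈ Δ⁺ set m(α,β) = √2 if α = β or ⟪α,β⟫ < 0, and m(α,β) = 1 otherwise. For γ ∈ E let P(γ) = {(α,β) ∈ Δ⁺ × Δ⁺ : α + β = γ} and S(γ) = ( ∑_{(α,β) ∈ P(γ)} m(α,β) r(α) r(β) )² − 2 ∑_{(α,β) ∈ P(γ)} r(α)² r(β)². If S(γ) > 0, then either P(γ) has more than two elements, or some (α,β) ∈ P(γ) satisfies ⟪α,β⟫ < 0. -/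
open Finset
open scoped InnerProductSpace
open scoped Classical

/-- Lemma 4.1 (Lemma sgamma): `S γ > 0` forces `γ` to decompose as a sum of two positive
roots in more than two ways (counting permutations) or as a sum of two positive roots
forming an obtuse angle. -/
theorem stmt4 {E : Type*} [NormedAddCommGroup E] [InnerProductSpace ℝ E]
    (Δ : Finset E) (r : E → ℝ) (hr : ∀ α ∈ Δ, 0 ≤ r α)
    (m : E → E → ℝ)
    (hm : ∀ α β : E, m α β = if α = β ∨ ⟪α, β⟫_ℝ < 0 then Real.sqrt 2 else 1)
    (γ : E)
    (hS : 0 < (∑ p ∈ (Δ ×ˢ Δ).filter (fun p : E × E => p.1 + p.2 = γ),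
          m p.1 p.2 * r p.1 * r p.2) ^ 2
        - 2 * ∑ p ∈ (Δ ×ˢ Δ).filter (fun p : E × E => p.1 + p.2 = γ),
            r p.1 ^ 2 * r p.2 ^ 2) :
    2 < ((Δ ×ˢ Δ).filter (fun p : E × E => p.1 + p.2 = γ)).card ∨
      ∃ p ∈ (Δ ×ˢ Δ).filter (fun p : E × E => p.1 + p.2 = γ), ⟪p.1, p.2⟫_ℝ < 0 := by
  by_contra h
  push_neg at h
  obtain ⟨hcard, hobs⟩ := h
  set F := (Δ ×ˢ Δ).filter (fun p : E × E => p.1 + p.2 = γ) with hF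
  have hsym : ∀ p ∈ F, p.swap ∈ F := by
    intro p hp
    simp only [hF, mem_filter, mem_product] at hp ⊢
    exact ⟨⟨hp.1.2, hp.1.1⟩, by rw [add_comm]; exact hp.2⟩
  -- m squared
  have hmsq : ∀ p ∈ F, m p.1 p.2 ^ 2 = if p.1 = p.2 then (2:ℝ) else 1 := by
    intro p hp
    rw [hm]
    by_cases hd : p.1 = p.2
    · simp [hd, Real.sq_sqrt (by norm_num : (2:ℝ) ≥ 0)]
    · have : ¬ ⟪p.1, p.2⟫_ℝ < 0 := not_lt.2 (hobs p hp)
      simp [hd, this]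
  -- sum of m squared ≤ 2
  have hsum2 : ∑ p ∈ F, m p.1 p.2 ^ 2 ≤ 2 := by
    have hle : F.card ≤ 2 := hcard
    have hrw : ∑ p ∈ F, m p.1 p.2 ^ 2 = ∑ p ∈ F, (if p.1 = p.2 then (2:ℝ) else 1) :=
      Finset.sum_congr rfl hmsq
    rw [hrw]
    interval_cases hc : F.card
    · rw [Finset.card_eq_zero] at hc
      simp [hc]
    · obtain ⟨p, hp⟩ := Finset.card_eq_one.1 hc
      have hpF : p ∈ F := by rw [hp]; exact mem_singleton_self p
      have hps : p.swap = p := by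
        have := hsym p hpF
        rw [hp, mem_singleton] at this; exact this
      have hd : p.1 = p.2 := congrArg Prod.snd hps
      simp [hp, hd]
    · obtain ⟨p, q, hpq, hpq2⟩ := Finset.card_eq_two.1 hc
      have hpF : p ∈ F := by rw [hpq2]; simp
      have hqF : q ∈ F := by rw [hpq2]; simp
      -- no diagonal element
      have key : ∀ a ∈ F, a.1 ≠ a.2 := by
        intro a haF hd
        have has : a.swap = a := Prod.ext hd.symm hd
        -- the other element
        obtain ⟨b, hbF, hba⟩ : ∃ b ∈ F, b ≠ a := by
          rcases eq_or_ne a p with rfl | hap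
          · exact ⟨q, hqF, fun hh => hpq hh.symm⟩
          · exact ⟨p, hpF, fun hh => hap hh.symm⟩
        have hbs : b.swap ∈ F := hsym b hbF
        have hFab : F = {p, q} := hpq2
        have hmem : ∀ c ∈ F, c = a ∨ c = b := by
          intro c hcF
          have hc' : c ∈ ({p,q} : Finset (E×E)) := hFab ▸ hcF
          have ha' : a ∈ ({p,q} : Finset (E×E)) := hFab ▸ haF
          have hb' : b ∈ ({p,q} : Finset (E×E)) := hFab ▸ hbF
          simp only [mem_insert, mem_singleton] at hc' ha' hb'
          rcases ha' with rfl | rfl <;> rcases hb' with rfl | rfl <;>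
            first
              | (exact absurd rfl hba)
              | (rcases hc' with rfl | rfl; exact Or.inl rfl; exact Or.inr rfl)
              | (rcases hc' with rfl | rfl; exact Or.inr rfl; exact Or.inl rfl)
        rcases hmem b.swap hbs with hbs' | hbs'
        · -- b.swap = a, so b = a.swap = a, contradiction
          have : b = a.swap := by rw [← hbs']; simp
          rw [has] at this; exact hba this
        · -- b.swap = b, so b diagonal; then a.1 + a.1 = γ = b.1 + b.1 gives a = b
          have hbd : b.1 = b.2 := congrArg Prod.snd hbs'
          have haγ : a.1 + a.1 = γ := by
            have := (mem_filter.1 haF).2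
            rwa [← hd] at this
          have hbγ : b.1 + b.1 = γ := by
            have := (mem_filter.1 hbF).2
            rwa [← hbd] at this
          have hab1 : a.1 = b.1 := by
            have h2 : (2:ℝ) • a.1 = (2:ℝ) • b.1 := by
              rw [two_smul, two_smul, haγ, hbγ]
            exact smul_right_injective E (by norm_num : (2:ℝ) ≠ 0) h2
          exact hba (Prod.ext hab1.symm (by rw [← hbd, ← hd]; exact hab1.symm))
      rw [hpq2, Finset.sum_pair hpq]
      rw [if_neg (key p hpF), if_neg (key q hqF)]
      norm_num
  -- Cauchy-Schwarz
  have hcs : (∑ p ∈ F, m p.1 p.2 * r p.1 * r p.2) ^ 2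
      ≤ (∑ p ∈ F, m p.1 p.2 ^ 2) * ∑ p ∈ F, (r p.1 * r p.2) ^ 2 := by
    have := Finset.sum_mul_sq_le_sq_mul_sq F (fun p => m p.1 p.2) (fun p => r p.1 * r p.2)
    simpa [mul_assoc] using this
  have hnn : 0 ≤ ∑ p ∈ F, (r p.1 * r p.2) ^ 2 :=
    Finset.sum_nonneg fun p _ => sq_nonneg _
  have hrw2 : ∑ p ∈ F, (r p.1 * r p.2) ^ 2 = ∑ p ∈ F, r p.1 ^ 2 * r p.2 ^ 2 := by
    refine Finset.sum_congr rfl fun p _ => ?_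
    ring
  have : (∑ p ∈ F, m p.1 p.2 * r p.1 * r p.2) ^ 2
      ≤ 2 * ∑ p ∈ F, r p.1 ^ 2 * r p.2 ^ 2 := by
    calc (∑ p ∈ F, m p.1 p.2 * r p.1 * r p.2) ^ 2
        ≤ (∑ p ∈ F, m p.1 p.2 ^ 2) * ∑ p ∈ F, (r p.1 * r p.2) ^ 2 := hcs
      _ ≤ 2 * ∑ p ∈ F, (r p.1 * r p.2) ^ 2 := mul_le_mul_of_nonneg_right hsum2 hnn
      _ = 2 * ∑ p ∈ F, r p.1 ^ 2 * r p.2 ^ 2 := by rw [hrw2]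
  linarith
end

section
/- Let A be an n × n real matrix with nonnegative entries that is strictly upper triangular (A_{ij} = 0 unless i < j) and has Frobenius norm 1, i.e. ∑_{i<j} A_{ij}² = 1. Then 8 · ∑_{i<j<k<ℓ} A_{ik} A_{jℓ} A_{iℓ} A_{jk} + 8 · ∑_{i,j} ((A²)_{ij})² ≤ 10. -/
open Finset

private lemma sumIoi {n : ℕ} (i : Fin n) (f : Fin n → ℝ) :
    ∑ j ∈ Ioi i, f j = ∑ j, if i < j then f j else 0 := by
  rw [← Finset.sum_filter]
  apply Finset.sum_congr _ (fun _ _ => rfl)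
  ext j; simp

/-- The combined estimate of the `A_n` case in Section 5:
`∑_{γ∈Φ₁} S_γ + ∑_{γ∈Φ₂} S_γ ≤ 2 + 8 = 10` for a strictly upper triangular
nonnegative matrix `A` of Frobenius norm one. -/
theorem stmt6 {n : ℕ} (A : Matrix (Fin n) (Fin n) ℝ)
    (hA : ∀ i j, 0 ≤ A i j)
    (hupper : ∀ i j : Fin n, ¬ i < j → A i j = 0)
    (hnorm : ∑ i : Fin n, ∑ j ∈ Ioi i, A i j ^ 2 = 1) :
    8 * ∑ i : Fin n, ∑ j ∈ Ioi i, ∑ k ∈ Ioi j, ∑ l ∈ Ioi k,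
        A i k * A j l * A i l * A j k
      + 8 * ∑ i : Fin n, ∑ j : Fin n, ((A * A) i j) ^ 2
      ≤ 10 := by
  set x : Fin n → Fin n → ℝ := fun i j => A i j ^ 2 with hx
  have hx0 : ∀ i j, 0 ≤ x i j := fun i j => sq_nonneg _
  set R : Fin n → ℝ := fun i => ∑ j, x i j with hR
  have hR0 : ∀ i, 0 ≤ R i := fun i => Finset.sum_nonneg fun j _ => hx0 i j
  -- total mass equals 1
  have htot : ∑ i, R i = 1 := by
    rw [← hnorm]
    refine Finset.sum_congr rfl fun i _ => ?_
    rw [sumIoi]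
    refine Finset.sum_congr rfl fun j _ => ?_
    by_cases h : i < j
    · simp [h, hx]
    · simp [h, hx, hupper i j h]
  -- the ‖A²‖_F² bound
  have hC : ∑ i : Fin n, ∑ j : Fin n, ((A * A) i j) ^ 2 ≤ 1 := by
    have key : ∀ i j : Fin n, ((A * A) i j) ^ 2 ≤ (∑ k, x i k) * (∑ k, x k j) := by
      intro i j
      rw [Matrix.mul_apply]
      exact Finset.sum_mul_sq_le_sq_mul_sq univ (fun k => A i k) (fun k => A k j)
    calc ∑ i : Fin n, ∑ j : Fin n, ((A * A) i j) ^ 2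
        ≤ ∑ i : Fin n, ∑ j : Fin n, (∑ k, x i k) * (∑ k, x k j) :=
          Finset.sum_le_sum fun i _ => Finset.sum_le_sum fun j _ => key i j
      _ = (∑ i, ∑ k, x i k) * (∑ j, ∑ k, x k j) := by
          rw [Finset.sum_mul_sum]
      _ = 1 := by
          rw [Finset.sum_comm (f := fun j k => x k j)]
          rw [show (∑ i, ∑ k, x i k) = ∑ i, R i from rfl,
            show (∑ k, ∑ j, x k j) = ∑ i, R i from rfl, htot, one_mul]
  -- key double-sum bound for fixed i < j
  have key4 : ∀ i j : Fin n,
      ∑ k ∈ Ioi j, ∑ l ∈ Ioi k, (x i k * x j l + x i l * x j k) ≤ R i * R j := by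
    intro i j
    have L1 : ∀ (F : Fin n → Fin n → ℝ),
        (∑ k ∈ Ioi j, ∑ l ∈ Ioi k, F k l)
          = ∑ k, ∑ l, if j < k ∧ k < l then F k l else 0 := by
      intro F
      rw [sumIoi]
      refine Finset.sum_congr rfl fun k _ => ?_
      by_cases h : j < k
      · simp only [h, if_true, true_and]
        rw [sumIoi]
      · simp [h]
    rw [L1]
    have split : (∑ k, ∑ l, if j < k ∧ k < l then x i k * x j l + x i l * x j k else 0)
        = (∑ k, ∑ l, if j < k ∧ k < l then x i k * x j l else 0)
          + (∑ k, ∑ l, if j < k ∧ k < l then x i l * x j k else 0) := by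
      rw [← Finset.sum_add_distrib]
      refine Finset.sum_congr rfl fun k _ => ?_
      rw [← Finset.sum_add_distrib]
      refine Finset.sum_congr rfl fun l _ => ?_
      by_cases h : j < k ∧ k < l <;> simp [h]
    rw [split]
    have swap2 : (∑ k, ∑ l, if j < k ∧ k < l then x i l * x j k else 0)
        = ∑ k, ∑ l, if j < l ∧ l < k then x i k * x j l else 0 := by
      rw [Finset.sum_comm]
    rw [swap2, ← Finset.sum_add_distrib]
    have hRR : R i * R j = ∑ k, ∑ l, x i k * x j l := by
      rw [hR]; exact Finset.sum_mul_sum _ _ _ _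
    rw [hRR]
    refine Finset.sum_le_sum fun k _ => ?_
    rw [← Finset.sum_add_distrib]
    refine Finset.sum_le_sum fun l _ => ?_
    have hnn : 0 ≤ x i k * x j l := mul_nonneg (hx0 i k) (hx0 j l)
    by_cases h1 : j < k ∧ k < l
    · by_cases h2 : j < l ∧ l < k
      · exact absurd (lt_trans h1.2 h2.2) (lt_irrefl k)
      · simp [h1, h2]
    · by_cases h2 : j < l ∧ l < k
      · simp [h1, h2]
      · simp [h1, h2, hnn]
  -- D ≤ 1/2
  have hD : ∑ i, ∑ j ∈ Ioi i, R i * R j ≤ 1 / 2 := by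
    have expand : (1 : ℝ) = ∑ i, ∑ j, R i * R j := by
      rw [← Finset.sum_mul_sum, htot, one_mul]
    have hfull : (∑ i, ∑ j, if i < j then R i * R j else 0)
        + (∑ i, ∑ j, if j < i then R i * R j else 0) ≤ 1 := by
      rw [expand, ← Finset.sum_add_distrib]
      refine Finset.sum_le_sum fun i _ => ?_
      rw [← Finset.sum_add_distrib]
      refine Finset.sum_le_sum fun j _ => ?_
      have hnn : 0 ≤ R i * R j := mul_nonneg (hR0 i) (hR0 j)
      by_cases h1 : i < j
      · by_cases h2 : j < i
        · exact absurd (lt_trans h1 h2) (lt_irrefl i)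
        · simp [h1, h2]
      · by_cases h2 : j < i
        · simp [h1, h2]
        · simp [h1, h2, hnn]
    have sym : (∑ i, ∑ j, if j < i then R i * R j else 0)
        = ∑ i, ∑ j, if i < j then R i * R j else 0 := by
      rw [Finset.sum_comm]
      refine Finset.sum_congr rfl fun i _ => Finset.sum_congr rfl fun j _ => ?_
      by_cases h : i < j <;> simp [h, mul_comm]
    have hIoiD : (∑ i, ∑ j ∈ Ioi i, R i * R j)
        = ∑ i, ∑ j, if i < j then R i * R j else 0 :=
      Finset.sum_congr rfl fun i _ => sumIoi i _
    rw [hIoiD]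
    rw [sym] at hfull
    linarith
  -- bound the quadruple sum
  have hS1 : (∑ i : Fin n, ∑ j ∈ Ioi i, ∑ k ∈ Ioi j, ∑ l ∈ Ioi k,
      A i k * A j l * A i l * A j k) ≤ 1 / 4 := by
    have step1 : (∑ i : Fin n, ∑ j ∈ Ioi i, ∑ k ∈ Ioi j, ∑ l ∈ Ioi k,
        A i k * A j l * A i l * A j k)
        ≤ ∑ i, ∑ j ∈ Ioi i, R i * R j / 2 := by
      refine Finset.sum_le_sum fun i _ => Finset.sum_le_sum fun j _ => ?_
      have amgm : ∀ k l : Fin n, A i k * A j l * A i l * A j k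
          ≤ (x i k * x j l + x i l * x j k) / 2 := by
        intro k l
        simp only [hx]
        nlinarith [sq_nonneg (A i k * A j l - A i l * A j k)]
      calc (∑ k ∈ Ioi j, ∑ l ∈ Ioi k, A i k * A j l * A i l * A j k)
          ≤ ∑ k ∈ Ioi j, ∑ l ∈ Ioi k, (x i k * x j l + x i l * x j k) / 2 :=
            Finset.sum_le_sum fun k _ => Finset.sum_le_sum fun l _ => amgm k l
        _ = (∑ k ∈ Ioi j, ∑ l ∈ Ioi k, (x i k * x j l + x i l * x j k)) / 2 := by
            rw [Finset.sum_div]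
            exact Finset.sum_congr rfl fun k _ => by rw [Finset.sum_div]
        _ ≤ R i * R j / 2 := by
            have := key4 i j
            linarith
    have step2 : (∑ i, ∑ j ∈ Ioi i, R i * R j / 2)
        = (∑ i, ∑ j ∈ Ioi i, R i * R j) / 2 := by
      rw [Finset.sum_div]
      exact Finset.sum_congr rfl fun i _ => by rw [Finset.sum_div]
    rw [step2] at step1
    linarith
  linarith
end

section
/- Let B be an n × n real matrix with nonnegative entries, B_{ij} ≥ 0. Then 8 · ∑_{i<j<k<ℓ} ( B_{ij} B_{kℓ} B_{ik} B_{jℓ} + B_{ij} B_{kℓ} B_{iℓ} B_{jk} + B_{ik} B_{jℓ} B_{iℓ} B_{jk} ) ≤ 18 · ( ∑_{i,j} B_{ij}² )². -/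
open Finset

/-- The estimate `∑_{γ∈Φ₃} S_γ ≤ 18‖B‖⁴` in the `D_n` case of Section 5. -/
theorem stmt7 {n : ℕ} (B : Matrix (Fin n) (Fin n) ℝ) (hB : ∀ i j, 0 ≤ B i j) :
    8 * ∑ i : Fin n, ∑ j ∈ Ioi i, ∑ k ∈ Ioi j, ∑ l ∈ Ioi k,
        (B i j * B k l * B i k * B j l
          + B i j * B k l * B i l * B j k
          + B i k * B j l * B i l * B j k)
      ≤ 18 * (∑ i : Fin n, ∑ j : Fin n, B i j ^ 2) ^ 2 := by
  set r : Fin n → ℝ := fun i => ∑ j, B i j ^ 2 with hr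
  have hrp : ∀ i, 0 ≤ r i := fun i => Finset.sum_nonneg fun j _ => sq_nonneg _
  set R : ℝ := ∑ i, ∑ k ∈ Ioi i, r i * r k with hR
  set S : ℝ := ∑ i, r i with hS
  have hSnn : 0 ≤ S := Finset.sum_nonneg fun i _ => hrp i
  -- Step 1 : pointwise AM-GM
  have step1 : ∑ i : Fin n, ∑ j ∈ Ioi i, ∑ k ∈ Ioi j, ∑ l ∈ Ioi k,
        (B i j * B k l * B i k * B j l + B i j * B k l * B i l * B j k
          + B i k * B j l * B i l * B j k)
      ≤ ∑ i : Fin n, ∑ j ∈ Ioi i, ∑ k ∈ Ioi j, ∑ l ∈ Ioi k,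
        (B i j ^ 2 * B k l ^ 2 + B i k ^ 2 * B j l ^ 2 + B i l ^ 2 * B j k ^ 2) := by
    refine sum_le_sum fun i _ => sum_le_sum fun j _ => sum_le_sum fun k _ =>
      sum_le_sum fun l _ => ?_
    nlinarith [sq_nonneg (B i j * B k l - B i k * B j l),
      sq_nonneg (B i j * B k l - B i l * B j k),
      sq_nonneg (B i k * B j l - B i l * B j k)]
  -- split the squared sum into three parts
  have split : ∑ i : Fin n, ∑ j ∈ Ioi i, ∑ k ∈ Ioi j, ∑ l ∈ Ioi k,
        (B i j ^ 2 * B k l ^ 2 + B i k ^ 2 * B j l ^ 2 + B i l ^ 2 * B j k ^ 2)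
      = (∑ i : Fin n, ∑ j ∈ Ioi i, ∑ k ∈ Ioi j, ∑ l ∈ Ioi k, B i j ^ 2 * B k l ^ 2)
      + (∑ i : Fin n, ∑ j ∈ Ioi i, ∑ k ∈ Ioi j, ∑ l ∈ Ioi k, B i k ^ 2 * B j l ^ 2)
      + (∑ i : Fin n, ∑ j ∈ Ioi i, ∑ k ∈ Ioi j, ∑ l ∈ Ioi k, B i l ^ 2 * B j k ^ 2) := by
    simp [Finset.sum_add_distrib]
  -- generic bound used for Y and Z type sums
  have inner_bound : ∀ (f g : Fin n → ℝ), (∀ x, 0 ≤ f x) → (∀ x, 0 ≤ g x) →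
      ∀ j : Fin n, ∑ k ∈ Ioi j, ∑ l ∈ Ioi k, f k * g l ≤ (∑ k, f k) * (∑ l, g l) := by
    intro f g hf hg j
    rw [Finset.sum_mul_sum]
    refine le_trans (sum_le_sum fun k _ => ?_)
      (sum_le_sum_of_subset_of_nonneg (subset_univ _) fun k _ _ =>
        Finset.sum_nonneg fun l _ => mul_nonneg (hf k) (hg l))
    exact sum_le_sum_of_subset_of_nonneg (subset_univ _) fun l _ _ => mul_nonneg (hf k) (hg l)
  -- Y sum
  have hY : (∑ i : Fin n, ∑ j ∈ Ioi i, ∑ k ∈ Ioi j, ∑ l ∈ Ioi k, B i k ^ 2 * B j l ^ 2) ≤ R := by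
    refine sum_le_sum fun i _ => sum_le_sum fun j _ => ?_
    exact inner_bound (fun k => B i k ^ 2) (fun l => B j l ^ 2)
      (fun _ => sq_nonneg _) (fun _ => sq_nonneg _) j
  -- Z sum
  have hZ : (∑ i : Fin n, ∑ j ∈ Ioi i, ∑ k ∈ Ioi j, ∑ l ∈ Ioi k, B i l ^ 2 * B j k ^ 2) ≤ R := by
    refine sum_le_sum fun i _ => sum_le_sum fun j _ => ?_
    calc ∑ k ∈ Ioi j, ∑ l ∈ Ioi k, B i l ^ 2 * B j k ^ 2
        ≤ (∑ k, B j k ^ 2) * (∑ l, B i l ^ 2) := by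
          have := inner_bound (fun k => B j k ^ 2) (fun l => B i l ^ 2)
            (fun _ => sq_nonneg _) (fun _ => sq_nonneg _) j
          refine le_trans (le_of_eq ?_) this
          exact Finset.sum_congr rfl fun k _ => Finset.sum_congr rfl fun l _ => mul_comm _ _
      _ = r i * r j := mul_comm _ _
  -- X sum
  have hX : (∑ i : Fin n, ∑ j ∈ Ioi i, ∑ k ∈ Ioi j, ∑ l ∈ Ioi k, B i j ^ 2 * B k l ^ 2) ≤ R := by
    have hRalt : R = ∑ i, (∑ j, B i j ^ 2) * (∑ k ∈ Ioi i, r k) := by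
      refine Finset.sum_congr rfl fun i _ => ?_
      rw [Finset.mul_sum]
    rw [hRalt]
    refine sum_le_sum fun i _ => ?_
    calc ∑ j ∈ Ioi i, ∑ k ∈ Ioi j, ∑ l ∈ Ioi k, B i j ^ 2 * B k l ^ 2
        ≤ ∑ j ∈ Ioi i, B i j ^ 2 * (∑ k ∈ Ioi i, r k) := by
          refine sum_le_sum fun j hj => ?_
          have hij : i ≤ j := le_of_lt (mem_Ioi.mp hj)
          calc ∑ k ∈ Ioi j, ∑ l ∈ Ioi k, B i j ^ 2 * B k l ^ 2
              ≤ ∑ k ∈ Ioi j, B i j ^ 2 * r k := by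
                refine sum_le_sum fun k _ => ?_
                rw [← Finset.mul_sum]
                refine mul_le_mul_of_nonneg_left ?_ (sq_nonneg _)
                exact sum_le_sum_of_subset_of_nonneg (subset_univ _)
                  fun l _ _ => sq_nonneg _
            _ ≤ ∑ k ∈ Ioi i, B i j ^ 2 * r k :=
                sum_le_sum_of_subset_of_nonneg (Ioi_subset_Ioi hij)
                  fun k _ _ => mul_nonneg (sq_nonneg _) (hrp k)
            _ = B i j ^ 2 * (∑ k ∈ Ioi i, r k) := by rw [Finset.mul_sum]
      _ = (∑ j ∈ Ioi i, B i j ^ 2) * (∑ k ∈ Ioi i, r k) := by rw [Finset.sum_mul]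
      _ ≤ (∑ j, B i j ^ 2) * (∑ k ∈ Ioi i, r k) := by
          refine mul_le_mul_of_nonneg_right ?_ (Finset.sum_nonneg fun k _ => hrp k)
          exact sum_le_sum_of_subset_of_nonneg (subset_univ _) fun j _ _ => sq_nonneg _
  -- Step 3 : 2R ≤ S^2
  have h2R : 2 * R ≤ S ^ 2 := by
    have key := Finset.sum_sum_Ioi_add_eq_sum_sum_off_diag (fun a b : Fin n => r a * r b)
    have h1 : ∑ i, ∑ j ∈ Ioi i, (r j * r i + r i * r j) = 2 * R := by
      rw [hR, Finset.mul_sum]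
      refine Finset.sum_congr rfl fun i _ => ?_
      rw [Finset.mul_sum]
      exact Finset.sum_congr rfl fun j _ => by ring
    refine le_trans (le_of_eq (h1.symm.trans key)) ?_
    have hSsq : S ^ 2 = ∑ i : Fin n, ∑ j, r j * r i := by
      rw [sq, hS, Finset.sum_mul_sum]
      exact Finset.sum_congr rfl fun i _ => Finset.sum_congr rfl fun j _ => mul_comm _ _
    rw [hSsq]
    refine sum_le_sum fun i _ => ?_
    exact sum_le_sum_of_subset_of_nonneg (subset_univ _)
      fun j _ _ => mul_nonneg (hrp j) (hrp i)
  nlinarith [step1, split, hX, hY, hZ, h2R, sq_nonneg S]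
end

section
/- For all real numbers X, Y, Z ≥ 0 with X² + Y² + Z² = 1, one has 10X⁴ + 56X²Y² + 18Y⁴ + Z²·(12X² + 16XY + 16Y²) + 2Z⁴ ≤ 22 − 20Z², and in particular this quantity is at most 22. -/
/-- The final estimate of the `B_n` case in Section 5. -/
theorem stmt11 (X Y Z : ℝ) (hX : 0 ≤ X) (hY : 0 ≤ Y) (hZ : 0 ≤ Z)
    (h : X ^ 2 + Y ^ 2 + Z ^ 2 = 1) :
    10 * X ^ 4 + 56 * X ^ 2 * Y ^ 2 + 18 * Y ^ 4
        + Z ^ 2 * (12 * X ^ 2 + 16 * X * Y + 16 * Y ^ 2) + 2 * Z ^ 4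
      ≤ 22 - 20 * Z ^ 2 ∧
    10 * X ^ 4 + 56 * X ^ 2 * Y ^ 2 + 18 * Y ^ 4
        + Z ^ 2 * (12 * X ^ 2 + 16 * X * Y + 16 * Y ^ 2) + 2 * Z ^ 4
      ≤ 22 := by
  have h1 : 10 * X ^ 4 + 56 * X ^ 2 * Y ^ 2 + 18 * Y ^ 4
        + Z ^ 2 * (12 * X ^ 2 + 16 * X * Y + 16 * Y ^ 2) + 2 * Z ^ 4
      ≤ 22 - 20 * Z ^ 2 := by
    have hp : 10 * X ^ 4 + 56 * X ^ 2 * Y ^ 2 + 18 * Y ^ 4 ≤ 22 * (X ^ 2 + Y ^ 2) ^ 2 := by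
      nlinarith [sq_nonneg (6 * X ^ 2 - 3 * Y ^ 2), sq_nonneg (X * Y)]
    have hq : 12 * X ^ 2 + 16 * X * Y + 16 * Y ^ 2 ≤ 24 * (X ^ 2 + Y ^ 2) := by
      nlinarith [sq_nonneg (3 * X - 2 * Y), sq_nonneg X, sq_nonneg Y]
    nlinarith [mul_le_mul_of_nonneg_left hq (sq_nonneg Z), sq_nonneg Z, sq_nonneg (X ^ 2 + Y ^ 2)]
  exact ⟨h1, h1.trans (by nlinarith [sq_nonneg Z])⟩
end

section
/- Let Δ⁺ ⊂ ℝ² be the set of six vectors {(1,0), (−1/2, √3/2), (1/2, √3/2), (3/2, √3/2), (−3/2, √3/2), (0, √3)} (the positive roots of the root system G₂). For α, β ∈ Δ⁺ set m(α,β)² = 2 if α = β or ⟪α,β⟫ < 0, and m(α,β)² = 1 otherwise. Then the maximum, over all γ ∈ ℝ² expressible as γ = α + β with α, β ∈ Δ⁺, of ∑_{(α,β) ∈ Δ⁺×Δ⁺, α+β=γ} m(α,β)², equals 6. -/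
def G2D : Finset (ℤ × ℤ) := {(2,0),(-1,1),(1,1),(3,1),(-3,1),(0,2)}

def G2F (c : ℤ × ℤ) : ℤ :=
  ∑ p ∈ (G2D ×ˢ G2D).filter (fun p => p.1 + p.2 = c),
    (if p.1 = p.2 ∨ p.1.1*p.2.1 + 3*p.1.2*p.2.2 < 0 then 2 else 1)

lemma G2F_le : ∀ a ∈ G2D, ∀ b ∈ G2D, G2F (a+b) ≤ 6 := by decide
lemma G2F_top : G2F (0,2) = 6 := by decide

noncomputable def G2g : ℤ × ℤ → ℝ × ℝ := fun p => ((p.1 : ℝ)/2, (p.2 : ℝ) * Real.sqrt 3 / 2)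

lemma G2g_inj : Function.Injective G2g := by
  intro p q h
  have h1 := congrArg Prod.fst h
  have h2 := congrArg Prod.snd h
  have hs : (0:ℝ) < Real.sqrt 3 := Real.sqrt_pos.2 (by norm_num)
  simp only [G2g] at h1 h2
  have e1 : (p.1 : ℝ) = q.1 := by linarith
  have e2 : (p.2 : ℝ) = q.2 := by
    have : (p.2 : ℝ) * Real.sqrt 3 = (q.2 : ℝ) * Real.sqrt 3 := by linarith
    exact mul_right_cancel₀ (ne_of_gt hs) this
  exact Prod.ext (by exact_mod_cast e1) (by exact_mod_cast e2)

lemma G2g_add (p q : ℤ × ℤ) : G2g (p + q) = G2g p + G2g q := by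
  simp only [G2g, Prod.ext_iff, Prod.fst_add, Prod.snd_add]
  constructor <;> push_cast <;> ring

open Finset
open scoped Classical

/-- The computation `C_Δ = 6` for the root system of type `G₂` (Subsection 3.1 and the
Appendix of the paper): the maximum over all sums `γ = α + β` of two positive roots of
`∑_{(α,β) : α+β=γ} m(α,β)²` equals `6`. Here `msq α β = m(α,β)²` is `2` if `α = β` or
`⟪α,β⟫ < 0` and `1` otherwise, and pairs are ordered. -/
theorem stmt16 (msq : (ℝ × ℝ) → (ℝ × ℝ) → ℝ)
    (hm : ∀ α β : ℝ × ℝ,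
      msq α β = if α = β ∨ α.1 * β.1 + α.2 * β.2 < 0 then 2 else 1)
    (Δ : Finset (ℝ × ℝ))
    (hΔ : Δ = {((1 : ℝ), (0 : ℝ)), (-1/2, Real.sqrt 3 / 2), (1/2, Real.sqrt 3 / 2),
      (3/2, Real.sqrt 3 / 2), (-3/2, Real.sqrt 3 / 2), (0, Real.sqrt 3)}) :
    IsGreatest
      {x : ℝ | ∃ γ : ℝ × ℝ, (∃ α ∈ Δ, ∃ β ∈ Δ, α + β = γ) ∧
        x = ∑ p ∈ (Δ ×ˢ Δ).filter (fun p : (ℝ × ℝ) × (ℝ × ℝ) => p.1 + p.2 = γ),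
              msq p.1 p.2}
      6 := by
  have hs3 : Real.sqrt 3 * Real.sqrt 3 = 3 := Real.mul_self_sqrt (by norm_num)
  -- Δ is the image of the integer model
  have hΔ' : Δ = G2D.image G2g := by
    rw [hΔ]
    have e1 : G2g (2,0) = ((1:ℝ), (0:ℝ)) := by
      refine Prod.ext ?_ ?_ <;> simp [G2g] <;> norm_num
    have e2 : G2g (-1,1) = ((-1/2 : ℝ), Real.sqrt 3 / 2) := by
      refine Prod.ext ?_ ?_ <;> simp [G2g] <;> norm_num
    have e3 : G2g (1,1) = ((1/2 : ℝ), Real.sqrt 3 / 2) := by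
      refine Prod.ext ?_ ?_ <;> simp [G2g] <;> norm_num
    have e4 : G2g (3,1) = ((3/2 : ℝ), Real.sqrt 3 / 2) := by
      refine Prod.ext ?_ ?_ <;> simp [G2g] <;> norm_num
    have e5 : G2g (-3,1) = ((-3/2 : ℝ), Real.sqrt 3 / 2) := by
      refine Prod.ext ?_ ?_ <;> simp [G2g] <;> norm_num
    have e6 : G2g (0,2) = ((0:ℝ), Real.sqrt 3) := by
      refine Prod.ext ?_ ?_ <;> simp [G2g] <;> ring
    rw [show (G2D.image G2g)
        = {G2g (2,0), G2g (-1,1), G2g (1,1), G2g (3,1), G2g (-3,1), G2g (0,2)} by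
      simp only [G2D, Finset.image_insert, Finset.image_singleton]]
    rw [e1, e2, e3, e4, e5, e6]
  -- msq on image points
  have hmsq : ∀ p q : ℤ × ℤ,
      msq (G2g p) (G2g q)
        = ((if p = q ∨ p.1*q.1 + 3*p.2*q.2 < 0 then (2:ℤ) else 1 : ℤ) : ℝ) := by
    intro p q
    rw [hm]
    have hIP : (G2g p).1 * (G2g q).1 + (G2g p).2 * (G2g q).2
        = ((p.1*q.1 + 3*p.2*q.2 : ℤ) : ℝ) / 4 := by
      simp only [G2g]
      push_cast
      linear_combination ((p.2 : ℝ) * q.2 / 4) * hs3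
    have hc : (G2g p = G2g q ∨ (G2g p).1 * (G2g q).1 + (G2g p).2 * (G2g q).2 < 0)
        ↔ (p = q ∨ p.1*q.1 + 3*p.2*q.2 < 0) := by
      rw [hIP, G2g_inj.eq_iff]
      constructor
      · rintro (h | h)
        · exact Or.inl h
        · right; exact_mod_cast (by linarith : ((p.1*q.1 + 3*p.2*q.2 : ℤ) : ℝ) < 0)
        
      · rintro (h | h)
        · exact Or.inl h
        · right
          have : ((p.1*q.1 + 3*p.2*q.2 : ℤ) : ℝ) < 0 := by exact_mod_cast h
          linarith
    rw [if_congr hc rfl rfl]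
    split_ifs <;> norm_num
  -- transport of the sum
  have hsum : ∀ c : ℤ × ℤ,
      (∑ p ∈ (Δ ×ˢ Δ).filter (fun p : (ℝ × ℝ) × (ℝ × ℝ) => p.1 + p.2 = G2g c),
        msq p.1 p.2) = (G2F c : ℝ) := by
    intro c
    have hprod : (G2D.image G2g) ×ˢ (G2D.image G2g)
        = (G2D ×ˢ G2D).image (Prod.map G2g G2g) := by
      ext ⟨x, y⟩
      simp only [Finset.mem_product, Finset.mem_image]
      constructor
      · rintro ⟨⟨a, ha, rfl⟩, ⟨b, hb, rfl⟩⟩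
        exact ⟨(a, b), by simp [Finset.mem_product, ha, hb], rfl⟩
      · rintro ⟨⟨a, b⟩, hab, h⟩
        simp only [Prod.map, Prod.mk.injEq] at h
        exact ⟨⟨a, hab.1, h.1⟩, ⟨b, hab.2, h.2⟩⟩
    rw [hΔ', hprod, Finset.filter_image, Finset.sum_image
      (fun a _ b _ h => (G2g_inj.prodMap G2g_inj) h)]
    have hfil : ∀ q : (ℤ × ℤ) × (ℤ × ℤ),
        ((Prod.map G2g G2g q).1 + (Prod.map G2g G2g q).2 = G2g c) ↔ (q.1 + q.2 = c) := by
      intro q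
      rw [show (Prod.map G2g G2g q).1 = G2g q.1 from rfl,
        show (Prod.map G2g G2g q).2 = G2g q.2 from rfl, ← G2g_add, G2g_inj.eq_iff]
    rw [Finset.filter_congr (fun q _ => hfil q)]
    rw [G2F]
    push_cast
    refine Finset.sum_congr rfl ?_
    rintro ⟨a, b⟩ _
    rw [show (Prod.map G2g G2g (a, b)).1 = G2g a from rfl,
      show (Prod.map G2g G2g (a, b)).2 = G2g b from rfl, hmsq a b]
    push_cast
    rfl
  constructor
  · refine ⟨G2g (0,2), ⟨G2g (-1,1), ?_, G2g (1,1), ?_, ?_⟩, ?_⟩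
    · rw [hΔ']; exact Finset.mem_image_of_mem _ (by decide)
    · rw [hΔ']; exact Finset.mem_image_of_mem _ (by decide)
    · rw [← G2g_add]; exact congrArg G2g (by decide)
    · rw [hsum (0,2), G2F_top]; norm_num
  · rintro x ⟨γ, ⟨α, hα, β, hβ, hγ⟩, rfl⟩
    rw [hΔ'] at hα hβ
    obtain ⟨a, ha, rfl⟩ := Finset.mem_image.1 hα
    obtain ⟨b, hb, rfl⟩ := Finset.mem_image.1 hβ
    rw [← hγ, ← G2g_add, hsum (a + b)]
    exact_mod_cast G2F_le a ha b hb
end
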